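/- For every positive integer n, the double inequality (2^{2n}-2)(n+1)(2n+1)/((2^{2n+1}-1)\pi^2) < |B_{2n+2}/B_{2n}| < (n+1)(2n+1)/(2\pi^2) holds, where B_{2k} denotes the 2k-th Bernoulli number. -/

import Mathlib

open Set Real Filter

noncomputable def B (n : ℕ) (t : ℝ) : ℝ := Polynomial.aeval t (Polynomial.bernoulli n)

noncomputable def Bnum (n : ℕ) : ℝ := ((bernoulli n : ℚ) : ℝ)

noncomputable def Z (m : ℕ) : ℝ := ∑' k : ℕ, 1/(k:ℝ)^m

lemma summZ {m : ℕ} (hm : 2 ≤ m) : Summable (fun k : ℕ => 1/(k:ℝ)^m) :=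
  Real.summable_one_div_nat_pow.2 (by omega)

lemma Z_hasSum {m : ℕ} (hm : 2 ≤ m) : HasSum (fun k : ℕ => 1/(k:ℝ)^m) (Z m) :=
  (summZ hm).hasSum

lemma Z_ge_one {m : ℕ} (hm : 2 ≤ m) : 1 ≤ Z m := by
  have h := Summable.le_tsum (summZ hm) 1 (fun j _ => by positivity)
  simp only [Nat.cast_one, one_pow, div_one] at h
  exact h

lemma Z_pos {m : ℕ} (hm : 2 ≤ m) : 0 < Z m := lt_of_lt_of_le one_pos (Z_ge_one hm)

lemma Z_even_hasSum {m : ℕ} (hm : 2 ≤ m) :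
    HasSum (fun k : ℕ => 1/((2*k : ℕ):ℝ)^m) (Z m / 2^m) := by
  have h := (Z_hasSum hm).mul_left ((1:ℝ)/2^m)
  have heq : (fun k : ℕ => (1:ℝ)/2^m * (1/(k:ℝ)^m)) = fun k : ℕ => 1/((2*k : ℕ):ℝ)^m := by
    funext k
    push_cast
    rw [mul_pow]
    field_simp
  rw [heq] at h
  convert h using 1
  exacts [rfl, by ring]

lemma Z_odd_hasSum {m : ℕ} (hm : 2 ≤ m) :
    HasSum (fun k : ℕ => 1/((2*k+1 : ℕ):ℝ)^m) (Z m - Z m / 2^m) := by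
  have hs : Summable (fun k : ℕ => 1/((2*k+1 : ℕ):ℝ)^m) :=
    (summZ hm).comp_injective (fun a b h => by omega)
  have ho := hs.hasSum
  have h := HasSum.even_add_odd (f := fun k : ℕ => 1/(k:ℝ)^m) (Z_even_hasSum hm) ho
  have heq := h.unique (Z_hasSum hm)
  have h2 : Z m - Z m / 2 ^ m = ∑' (b : ℕ), 1 / ((2*b+1 : ℕ):ℝ) ^ m := by
    linarith [heq]
  rw [h2]; exact ho

lemma mono_aux {x : ℝ} (hx : 2 ≤ x) {s : ℕ} (hs : 2 ≤ s) :
    1/(x+1)^s - 1/(x+1)^(s+2) ≤ 1/x^s - 1/x^(s+2) := by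
  have hx0 : (0:ℝ) < x := by linarith
  have hx1 : (0:ℝ) < x + 1 := by linarith
  have e1 : 1/x^s - 1/x^(s+2) = (x^2 - 1)/x^(s+2) := by
    rw [pow_add]; field_simp
  have e2 : 1/(x+1)^s - 1/(x+1)^(s+2) = ((x+1)^2 - 1)/(x+1)^(s+2) := by
    rw [pow_add]; field_simp
  rw [e1, e2, div_le_div_iff₀ (by positivity) (by positivity)]
  obtain ⟨r, rfl⟩ : ∃ r, s = 2 + r := ⟨s - 2, by omega⟩
  have hpr : x ^ r ≤ (x+1)^r := pow_le_pow_left₀ (by linarith) (by linarith) r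
  have hA : ((x+1)^2 - 1) * x^4 ≤ (x^2-1) * (x+1)^4 := by
    nlinarith [sq_nonneg x, sq_nonneg (x-2), pow_pos hx0 3, pow_pos hx0 2]
  calc ((x+1)^2-1) * x^(2+r+2) = (((x+1)^2-1) * x^4) * x^r := by ring
  _ ≤ ((x^2-1)*(x+1)^4) * ((x+1)^r) := by
      apply mul_le_mul hA hpr (by positivity) (mul_nonneg (by nlinarith) (by positivity))
  _ = (x^2-1) * (x+1)^(2+r+2) := by ring

lemma Z_lt {s : ℕ} (hs : 2 ≤ s) : Z (s+2) < Z s := by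
  apply Summable.tsum_lt_tsum (i := 2) ?_ ?_ (summZ (by omega)) (summZ hs)
  · intro k
    rcases Nat.eq_zero_or_pos k with rfl|hk
    · simp
    · have hk1 : (1:ℝ) ≤ (k:ℝ) := by exact_mod_cast hk
      exact one_div_le_one_div_of_le (by positivity)
        (pow_le_pow_right₀ hk1 (by omega))
  · have h2 : ((2:ℕ):ℝ) = 2 := by norm_num
    rw [h2]
    apply one_div_lt_one_div_of_lt (by positivity)
    exact pow_lt_pow_right₀ (by norm_num) (by omega)

lemma eta_lt {s : ℕ} (hs : 2 ≤ s) :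
    (2^(s+2) - 8) * Z s < (2^(s+2) - 2) * Z (s+2) := by
  have hs2 : 2 ≤ s + 2 := by omega
  have he1 := Z_even_hasSum hs
  have he2 := Z_even_hasSum hs2
  have ho1 := Z_odd_hasSum hs
  have ho2 := Z_odd_hasSum hs2
  have hd := (he1.sub he2).sub (ho1.sub ho2)
  have hpos : (0:ℝ) < (Z s / 2^s - Z (s+2)/2^(s+2)) -
      ((Z s - Z s/2^s) - (Z (s+2) - Z (s+2)/2^(s+2))) := by
    refine hasSum_lt (f := fun _ => (0:ℝ)) (i := 1) ?_ ?_ hasSum_zero hd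
    · intro k
      rcases Nat.eq_zero_or_pos k with rfl|hk
      · simp [zero_pow (by omega : s ≠ 0), zero_pow (by omega : s + 2 ≠ 0)]
      · have hx : (2:ℝ) ≤ ((2*k : ℕ):ℝ) := by
          have : (1:ℝ) ≤ (k:ℝ) := by exact_mod_cast hk
          push_cast; nlinarith [this]
        have := mono_aux hx hs
        have hc : ((2*k+1 : ℕ):ℝ) = ((2*k : ℕ):ℝ) + 1 := by push_cast; ring
        simp only [ge_iff_le]
        show (0:ℝ) ≤ _
        rw [hc]
        linarith [this]
    · -- strict at k = 1
      have h2 : ((2*1 : ℕ):ℝ) = 2 := by norm_num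
      have h3 : ((2*1+1 : ℕ):ℝ) = 3 := by norm_num
      simp only [h2, h3]
      have e4 : (2:ℝ)^(s+2) = 4 * 2^s := by rw [pow_add]; ring
      have e9 : (3:ℝ)^(s+2) = 9 * 3^s := by rw [pow_add]; ring
      have h1 : ((3:ℝ)/2)^2 ≤ ((3:ℝ)/2)^s := pow_le_pow_right₀ (by norm_num) hs
      rw [div_pow, div_pow, div_le_div_iff₀ (by positivity) (by positivity)] at h1
      have hA : (0:ℝ) < 2^s := by positivity
      have hB : (0:ℝ) < 3^s := by positivity
      rw [e4, e9]
      have ea : (1:ℝ)/2^s - 1/(4*2^s) = 3/(4*2^s) := by field_simp; ring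
      have eb : (1:ℝ)/3^s - 1/(9*3^s) = 8/(9*3^s) := by field_simp; ring
      rw [ea, eb, sub_pos, div_lt_div_iff₀ (by positivity) (by positivity)]
      nlinarith [h1, hA, hB]
  have ha : (0:ℝ) < 2^s := by positivity
  have e4 : (2:ℝ)^(s+2) = 4 * 2^s := by rw [pow_add]; ring
  rw [e4] at hpos ⊢
  have hu : 2^s * (Z s / 2^s) = Z s := by field_simp
  have hv : (4 * 2^s) * (Z (s+2) / (4 * 2^s)) = Z (s+2) := by field_simp
  nlinarith [mul_pos ha hpos, hu, hv]

lemma absB {k : ℕ} (hk : k ≠ 0) :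
    |Bnum (2*k)| = Z (2*k) * (2*k).factorial / (2^(2*k-1) * π^(2*k)) := by
  have hm : 2 ≤ 2 * k := by omega
  have h := (hasSum_zeta_nat hk).unique (Z_hasSum hm)
  have hZ := Z_pos hm
  have hfac : (0:ℝ) < ((2*k).factorial : ℝ) := by exact_mod_cast Nat.factorial_pos _
  have habs := congrArg abs h
  rw [abs_div, abs_mul, abs_mul, abs_mul, abs_pow, abs_pow, abs_pow, abs_neg, abs_one,
    one_pow, one_mul, abs_two, abs_of_pos pi_pos, abs_of_pos hZ, abs_of_pos hfac] at habs
  unfold Bnum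
  have hd : (0:ℝ) < 2^(2*k-1) * π^(2*k) := by positivity
  rw [eq_div_iff (ne_of_gt hd)]
  rw [div_eq_iff (ne_of_gt hfac)] at habs
  linarith [habs]

theorem stmt19 (n : ℕ) (hn : 1 ≤ n) :
    ((2:ℝ)^(2*n) - 2) * (n+1) * (2*n+1) / (((2:ℝ)^(2*n+1) - 1) * π^2) <
      |Bnum (2*n+2) / Bnum (2*n)| ∧
    |Bnum (2*n+2) / Bnum (2*n)| < (n+1 : ℝ) * (2*n+1) / (2*π^2) := by
  obtain ⟨m, rfl⟩ : ∃ m, n = m + 1 := ⟨n - 1, by omega⟩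
  have h1 := absB (k := m+1) (by omega)
  have h2 := absB (k := m+2) (by omega)
  rw [show 2*(m+1)-1 = 2*m+1 from by omega, show 2*(m+1) = 2*m+2 from by ring] at h1
  rw [show 2*(m+2)-1 = 2*m+3 from by omega, show 2*(m+2) = 2*m+4 from by ring] at h2
  have hZ1 : 0 < Z (2*m+2) := Z_pos (by omega)
  have hZ2 : 0 < Z (2*m+4) := Z_pos (by omega)
  have hZlt : Z (2*m+4) < Z (2*m+2) := by
    have := Z_lt (s := 2*m+2) (by omega)
    rwa [show 2*m+2+2 = 2*m+4 from by omega] at this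
  have heta : ((2:ℝ)^(2*m+4) - 8) * Z (2*m+2) < ((2:ℝ)^(2*m+4) - 2) * Z (2*m+4) := by
    have := eta_lt (s := 2*m+2) (by omega)
    rwa [show 2*m+2+2 = 2*m+4 from by omega] at this
  have hfac : ((2*m+4).factorial : ℝ) = (2*m+4) * (2*m+3) * ((2*m+2).factorial : ℝ) := by
    rw [show 2*m+4 = (2*m+3)+1 from by omega, Nat.factorial_succ]
    rw [show 2*m+3 = (2*m+2)+1 from by omega, Nat.factorial_succ]
    push_cast
    ring
  have hfacpos : (0:ℝ) < ((2*m+2).factorial : ℝ) := by exact_mod_cast Nat.factorial_pos _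
  have hpi := Real.pi_pos
  have hr : |Bnum (2*m+4) / Bnum (2*m+2)| =
      (2*(m:ℝ)+4) * (2*(m:ℝ)+3) * Z (2*m+4) / (4 * π^2 * Z (2*m+2)) := by
    rw [abs_div, h1, h2, hfac]
    rw [show (2:ℝ)^(2*m+3) = 4 * 2^(2*m+1) from by rw [show 2*m+3 = (2*m+1)+2 from by omega, pow_add]; ring]
    rw [show π^(2*m+4) = π^(2*m+2) * π^2 from by rw [show 2*m+4 = (2*m+2)+2 from by omega, pow_add]]
    have c1 : ((2:ℝ))^(2*m+1) ≠ 0 := by positivity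
    have c2 : π^(2*m+2) ≠ 0 := by positivity
    field_simp
  rw [show 2*(m+1)+2 = 2*m+4 from by ring, show 2*(m+1) = 2*m+2 from by ring,
    show 2*m+2+1 = 2*m+3 from by omega, hr]
  have hcast : ((m:ℝ)+1+1) = (m:ℝ)+2 := by ring
  push_cast
  have h4 : (2:ℝ)^(2*m+4) = 4 * 2^(2*m+2) := by
    rw [show 2*m+4 = (2*m+2)+2 from by omega, pow_add]; ring
  have h3 : (2:ℝ)^(2*m+3) = 2 * 2^(2*m+2) := by
    rw [show 2*m+3 = (2*m+2)+1 from by omega, pow_add]; ring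
  have hA1 : (1:ℝ) < 2^(2*m+3) := one_lt_pow₀ (by norm_num) (by omega)
  constructor
  · rw [div_lt_div_iff₀ (mul_pos (by linarith) (by positivity)) (by positivity)]
    rw [h3] at hA1 ⊢
    rw [h4] at heta
    have hkey := mul_lt_mul_of_pos_left heta
      (show (0:ℝ) < (2*(m:ℝ)+3) * ((m:ℝ)+2) * π^2 by positivity)
    nlinarith [hkey]
  · rw [div_lt_div_iff₀ (by positivity) (by positivity)]
    have hkey := mul_lt_mul_of_pos_left hZlt
      (show (0:ℝ) < (2*(m:ℝ)+4) * (2*(m:ℝ)+3) * (2*π^2) by positivity)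
    nlinarith [hkey]
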